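/- arXiv:1905.03315 — 3 statements merged into one kernel-verified Lean document; each statement's English description precedes it below -/
import Mathlib

section
/- For every natural number i and every nonnegative integers j, k, the value ∫₀^{2π} s^i sin(s)^j cos(s)^k ds is a polynomial in π with rational coefficients of degree at most i+1. -/
open Real

open intervalIntegral Polynomial in
private lemma ibp_cos (i n : ℕ) (hn : (n:ℝ) ≠ 0) :
    (∫ s in (0:ℝ)..(2*π), s ^ i * Real.cos (n * s))
      = -((i:ℝ)/n) * ∫ s in (0:ℝ)..(2*π), s ^ (i-1) * Real.sin (n * s) := by
  have hv : ∀ x : ℝ, HasDerivAt (fun s => Real.sin (n*s)/n) (Real.cos (n*x)) x := by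
    intro x
    have h1 : HasDerivAt (fun s : ℝ => (n:ℝ)*s) ((n:ℝ)) x := by
      simpa using (hasDerivAt_id x).const_mul ((n:ℝ))
    have h3 := ((Real.hasDerivAt_sin ((n:ℝ)*x)).comp x h1).div_const (n:ℝ)
    convert h3 using 1
    any_goals rw [mul_div_cancel_right₀ _ hn]
    all_goals rfl
  have hu : ∀ x : ℝ, HasDerivAt (fun s : ℝ => s ^ i) ((i:ℝ) * x ^ (i-1)) x :=
    fun x => hasDerivAt_pow i x
  have H := intervalIntegral.integral_mul_deriv_eq_deriv_mul (a := (0:ℝ)) (b := 2*π)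
    (u := fun s : ℝ => s ^ i) (v := fun s => Real.sin (n*s)/n)
    (u' := fun x => (i:ℝ)*x^(i-1)) (v' := fun x => Real.cos (n*x))
    (fun x _ => hu x) (fun x _ => hv x)
    (Continuous.intervalIntegrable (by fun_prop) _ _)
    (Continuous.intervalIntegrable (by fun_prop) _ _)
  rw [H]
  have hs : Real.sin ((n:ℝ) * (2*π)) = 0 := by
    have h : (n:ℝ) * (2*π) = ((2*n : ℕ) : ℝ) * π := by push_cast; ring
    rw [h, Real.sin_nat_mul_pi]
  have hrw : ∀ x : ℝ, ((i:ℝ)*x^(i-1)) * (Real.sin (n*x)/n)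
      = ((i:ℝ)/n) * (x^(i-1) * Real.sin (n*x)) := fun x => by ring
  simp only [hrw, intervalIntegral.integral_const_mul, hs, mul_zero, zero_div,
    zero_mul, sub_zero, zero_sub, Real.sin_zero]
  ring

open intervalIntegral Polynomial in
private lemma ibp_sin (i n : ℕ) (hn : (n:ℝ) ≠ 0) :
    (∫ s in (0:ℝ)..(2*π), s ^ i * Real.sin (n * s))
      = ((0:ℝ)^i - (2*π)^i)/n + ((i:ℝ)/n) * ∫ s in (0:ℝ)..(2*π), s ^ (i-1) * Real.cos (n * s) := by
  have hv : ∀ x : ℝ, HasDerivAt (fun s => -(Real.cos (n*s)/n)) (Real.sin (n*x)) x := by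
    intro x
    have h1 : HasDerivAt (fun s : ℝ => (n:ℝ)*s) ((n:ℝ)) x := by
      simpa using (hasDerivAt_id x).const_mul ((n:ℝ))
    have h3 := (((Real.hasDerivAt_cos ((n:ℝ)*x)).comp x h1).div_const (n:ℝ)).neg
    convert h3 using 1
    any_goals rw [mul_div_cancel_right₀ _ hn, neg_neg]
    all_goals rfl
  have hu : ∀ x : ℝ, HasDerivAt (fun s : ℝ => s ^ i) ((i:ℝ) * x ^ (i-1)) x :=
    fun x => hasDerivAt_pow i x
  have H := intervalIntegral.integral_mul_deriv_eq_deriv_mul (a := (0:ℝ)) (b := 2*π)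
    (u := fun s : ℝ => s ^ i) (v := fun s => -(Real.cos (n*s)/n))
    (u' := fun x => (i:ℝ)*x^(i-1)) (v' := fun x => Real.sin (n*x))
    (fun x _ => hu x) (fun x _ => hv x)
    (Continuous.intervalIntegrable (by fun_prop) _ _)
    (Continuous.intervalIntegrable (by fun_prop) _ _)
  rw [H]
  have hc : Real.cos ((n:ℝ) * (2*π)) = 1 := Real.cos_nat_mul_two_pi n
  have hrw : ∀ x : ℝ, ((i:ℝ)*x^(i-1)) * (-(Real.cos (n*x)/n))
      = (-((i:ℝ)/n)) * (x^(i-1) * Real.cos (n*x)) := fun x => by ring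
  simp only [hrw, intervalIntegral.integral_const_mul, hc, mul_zero, Real.cos_zero]
  ring

open Polynomial in
private lemma key (i n : ℕ) : ∃ p q : ℚ[X], p.natDegree ≤ i + 1 ∧ q.natDegree ≤ i + 1 ∧
    (∫ s in (0:ℝ)..(2*π), s ^ i * Real.cos (n * s)) = aeval π p ∧
    (∫ s in (0:ℝ)..(2*π), s ^ i * Real.sin (n * s)) = aeval π q := by
  induction i with
  | zero =>
    rcases Nat.eq_zero_or_pos n with hn | hn
    · subst hn
      refine ⟨Polynomial.C 2 * X, 0, ?_, ?_, ?_, ?_⟩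
      · exact (Polynomial.natDegree_C_mul_le _ _).trans (by simp)
      · simp
      · simp [Real.pi_pos.le]
      · simp
    · have hn' : (n:ℝ) ≠ 0 := Nat.cast_ne_zero.mpr hn.ne'
      refine ⟨0, 0, by simp, by simp, ?_, ?_⟩
      · rw [ibp_cos 0 n hn']; simp
      · rw [ibp_sin 0 n hn']; simp
  | succ m ih =>
    obtain ⟨p', q', hp', hq', hcp, hsq⟩ := ih
    rcases Nat.eq_zero_or_pos n with hn | hn
    · subst hn
      refine ⟨Polynomial.monomial (m+2) (2^(m+2)/(m+2)), 0, ?_, by simp, ?_, by simp⟩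
      · exact (Polynomial.natDegree_monomial_le _).trans le_rfl
      · have : (∫ s in (0:ℝ)..(2*π), s ^ (m+1) * Real.cos ((0:ℕ) * s))
            = ∫ s in (0:ℝ)..(2*π), s ^ (m+1) := by
          congr 1; funext s; simp
        rw [this, integral_pow, Polynomial.aeval_monomial]
        have h0 : (0:ℝ) ^ (m + 1 + 1) = 0 := by simp
        rw [h0]
        push_cast
        have : ((m:ℝ) + 2) ≠ 0 := by positivity
        field_simp
        norm_num
        ring
    · have hn' : (n:ℝ) ≠ 0 := Nat.cast_ne_zero.mpr hn.ne'
      refine ⟨(-(((m:ℚ)+1)/(n:ℚ))) • q',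
        Polynomial.monomial (m+1) ((-(2^(m+1):ℚ))/(n:ℚ)) + (((m:ℚ)+1)/(n:ℚ)) • p', ?_, ?_, ?_, ?_⟩
      · exact (Polynomial.natDegree_smul_le _ _).trans (hq'.trans (by omega))
      · refine (Polynomial.natDegree_add_le _ _).trans (max_le ?_ ?_)
        · exact (Polynomial.natDegree_monomial_le _).trans (by omega)
        · exact (Polynomial.natDegree_smul_le _ _).trans (hp'.trans (by omega))
      · rw [ibp_cos (m+1) n hn']
        simp only [Nat.add_sub_cancel, hsq, map_smul, Rat.smul_def]
        push_cast
        ring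
      · rw [ibp_sin (m+1) n hn']
        simp only [Nat.add_sub_cancel, hcp, map_add, map_smul, Polynomial.aeval_monomial,
          Rat.smul_def]
        have h0 : (0:ℝ) ^ (m + 1) = 0 := by simp
        rw [h0]
        push_cast
        ring_nf
        norm_num
        ring

private inductive IsTrig : (ℝ → ℝ) → Prop
  | cos (n : ℕ) : IsTrig (fun s => Real.cos (n * s))
  | sin (n : ℕ) : IsTrig (fun s => Real.sin (n * s))
  | add {f g} : IsTrig f → IsTrig g → IsTrig (fun s => f s + g s)
  | smul (q : ℚ) {f} : IsTrig f → IsTrig (fun s => (q:ℝ) * f s)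

private lemma IsTrig.continuous {f : ℝ → ℝ} (hf : IsTrig f) : Continuous f := by
  induction hf with
  | cos n => fun_prop
  | sin n => fun_prop
  | add hf hg ihf ihg => exact ihf.add ihg
  | smul q hf ihf => exact continuous_const.mul ihf

private lemma IsTrig.cos_mul {f : ℝ → ℝ} (hf : IsTrig f) :
    IsTrig (fun s => Real.cos s * f s) := by
  induction hf with
  | cos n =>
    rcases n with _ | m
    · have h : (fun s => Real.cos s * Real.cos ((0:ℕ) * s))
          = fun s => Real.cos ((1:ℕ) * s) := by funext s; simp
      rw [h]; exact IsTrig.cos 1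
    · have h : (fun s => Real.cos s * Real.cos (((m+1:ℕ)) * s))
          = fun s => ((1/2 : ℚ) : ℝ) * Real.cos (((m+2:ℕ)) * s)
              + ((1/2 : ℚ) : ℝ) * Real.cos ((m:ℕ) * s) := by
        funext s
        have h1 : ((m+2:ℕ):ℝ) * s = s + ((m+1:ℕ):ℝ) * s := by push_cast; ring
        have h2 : ((m:ℕ):ℝ) * s = ((m+1:ℕ):ℝ) * s - s := by push_cast; ring
        rw [h1, h2, Real.cos_add, Real.cos_sub]
        push_cast
        ring
      rw [h]; exact IsTrig.add (IsTrig.smul _ (IsTrig.cos _)) (IsTrig.smul _ (IsTrig.cos _))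
  | sin n =>
    rcases n with _ | m
    · have h : (fun s => Real.cos s * Real.sin ((0:ℕ) * s))
          = fun s => ((0 : ℚ) : ℝ) * Real.cos ((0:ℕ) * s) := by funext s; simp
      rw [h]; exact IsTrig.smul _ (IsTrig.cos _)
    · have h : (fun s => Real.cos s * Real.sin (((m+1:ℕ)) * s))
          = fun s => ((1/2 : ℚ) : ℝ) * Real.sin (((m+2:ℕ)) * s)
              + ((1/2 : ℚ) : ℝ) * Real.sin ((m:ℕ) * s) := by
        funext s
        have h1 : ((m+2:ℕ):ℝ) * s = ((m+1:ℕ):ℝ) * s + s := by push_cast; ring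
        have h2 : ((m:ℕ):ℝ) * s = ((m+1:ℕ):ℝ) * s - s := by push_cast; ring
        rw [h1, h2, Real.sin_add, Real.sin_sub]
        push_cast
        ring
      rw [h]; exact IsTrig.add (IsTrig.smul _ (IsTrig.sin _)) (IsTrig.smul _ (IsTrig.sin _))
  | add hf hg ihf ihg =>
    have := IsTrig.add ihf ihg
    convert this using 1
    funext s; ring
  | smul q hf ihf =>
    have := IsTrig.smul q ihf
    convert this using 1
    funext s; ring

private lemma IsTrig.sin_mul {f : ℝ → ℝ} (hf : IsTrig f) :
    IsTrig (fun s => Real.sin s * f s) := by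
  induction hf with
  | cos n =>
    rcases n with _ | m
    · have h : (fun s => Real.sin s * Real.cos ((0:ℕ) * s))
          = fun s => Real.sin ((1:ℕ) * s) := by funext s; simp
      rw [h]; exact IsTrig.sin 1
    · have h : (fun s => Real.sin s * Real.cos (((m+1:ℕ)) * s))
          = fun s => ((1/2 : ℚ) : ℝ) * Real.sin (((m+2:ℕ)) * s)
              + ((-1/2 : ℚ) : ℝ) * Real.sin ((m:ℕ) * s) := by
        funext s
        have h1 : ((m+2:ℕ):ℝ) * s = s + ((m+1:ℕ):ℝ) * s := by push_cast; ring
        have h2 : ((m:ℕ):ℝ) * s = ((m+1:ℕ):ℝ) * s - s := by push_cast; ring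
        rw [h1, h2, Real.sin_add, Real.sin_sub]
        push_cast
        ring
      rw [h]; exact IsTrig.add (IsTrig.smul _ (IsTrig.sin _)) (IsTrig.smul _ (IsTrig.sin _))
  | sin n =>
    rcases n with _ | m
    · have h : (fun s => Real.sin s * Real.sin ((0:ℕ) * s))
          = fun s => ((0 : ℚ) : ℝ) * Real.cos ((0:ℕ) * s) := by funext s; simp
      rw [h]; exact IsTrig.smul _ (IsTrig.cos _)
    · have h : (fun s => Real.sin s * Real.sin (((m+1:ℕ)) * s))
          = fun s => ((1/2 : ℚ) : ℝ) * Real.cos ((m:ℕ) * s)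
              + ((-1/2 : ℚ) : ℝ) * Real.cos (((m+2:ℕ)) * s) := by
        funext s
        have h1 : ((m+2:ℕ):ℝ) * s = ((m+1:ℕ):ℝ) * s + s := by push_cast; ring
        have h2 : ((m:ℕ):ℝ) * s = ((m+1:ℕ):ℝ) * s - s := by push_cast; ring
        rw [h1, h2, Real.cos_add, Real.cos_sub]
        push_cast
        ring
      rw [h]; exact IsTrig.add (IsTrig.smul _ (IsTrig.cos _)) (IsTrig.smul _ (IsTrig.cos _))
  | add hf hg ihf ihg =>
    have := IsTrig.add ihf ihg
    convert this using 1
    funext s; ring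
  | smul q hf ihf =>
    have := IsTrig.smul q ihf
    convert this using 1
    funext s; ring

open Polynomial in
private lemma IsTrig.integral_poly {f : ℝ → ℝ} (hf : IsTrig f) (i : ℕ) :
    ∃ p : ℚ[X], p.natDegree ≤ i + 1 ∧
      (∫ s in (0:ℝ)..(2*π), s ^ i * f s) = aeval π p := by
  induction hf with
  | cos n => obtain ⟨p, q, hp, _, hcp, _⟩ := key i n; exact ⟨p, hp, hcp⟩
  | sin n => obtain ⟨p, q, _, hq, _, hsq⟩ := key i n; exact ⟨q, hq, hsq⟩
  | @add f g hf hg ihf ihg =>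
    obtain ⟨p₁, hp₁, he₁⟩ := ihf
    obtain ⟨p₂, hp₂, he₂⟩ := ihg
    refine ⟨p₁ + p₂, (Polynomial.natDegree_add_le _ _).trans (max_le hp₁ hp₂), ?_⟩
    have h : (∫ s in (0:ℝ)..(2*π), s ^ i * (f s + g s))
        = (∫ s in (0:ℝ)..(2*π), s ^ i * f s) + ∫ s in (0:ℝ)..(2*π), s ^ i * g s := by
      rw [← intervalIntegral.integral_add
        (Continuous.intervalIntegrable (by exact (continuous_pow i).mul hf.continuous) _ _)
        (Continuous.intervalIntegrable (by exact (continuous_pow i).mul hg.continuous) _ _)]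
      congr 1; funext s; ring
    rw [h, he₁, he₂, map_add]
  | @smul q f hf ihf =>
    obtain ⟨p, hp, he⟩ := ihf
    refine ⟨q • p, (Polynomial.natDegree_smul_le _ _).trans hp, ?_⟩
    have h : (∫ s in (0:ℝ)..(2*π), s ^ i * ((q:ℝ) * f s))
        = (q:ℝ) * ∫ s in (0:ℝ)..(2*π), s ^ i * f s := by
      rw [← intervalIntegral.integral_const_mul]
      congr 1; funext s; ring
    rw [h, he, map_smul, Rat.smul_def]

private lemma isTrig_pow (j k : ℕ) : IsTrig (fun s => Real.sin s ^ j * Real.cos s ^ k) := by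
  induction j with
  | zero =>
    induction k with
    | zero =>
      have h : (fun s : ℝ => Real.sin s ^ 0 * Real.cos s ^ 0)
          = fun s => Real.cos ((0:ℕ) * s) := by funext s; simp
      rw [h]; exact IsTrig.cos 0
    | succ m ih =>
      have := ih.cos_mul
      convert this using 1
      funext s; ring
  | succ m ih =>
    have := ih.sin_mul
    convert this using 1
    funext s; ring

theorem stmt6 (i j k : ℕ) :
    ∃ p : Polynomial ℚ, p.natDegree ≤ i + 1 ∧
      (∫ s in (0:ℝ)..(2 * π), s ^ i * Real.sin s ^ j * Real.cos s ^ k)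
        = Polynomial.aeval π p := by
  obtain ⟨p, hp, he⟩ := (isTrig_pow j k).integral_poly i
  refine ⟨p, hp, ?_⟩
  rw [← he]
  congr 1; funext s; ring
end

section
/- For any strictly increasing exponents 0 ≤ s₁ < ⋯ < s_m, there exist nonzero real coefficients a₁, …, a_m such that the polynomial m(x) = Σⱼ aⱼ x^{sⱼ} has exactly m−1 distinct positive real roots. -/
open Set

lemma rolle_count (f : ℝ → ℝ) (hf : Differentiable ℝ f)
    (hT : {x : ℝ | 0 < x ∧ deriv f x = 0}.Finite) :
    {x : ℝ | 0 < x ∧ f x = 0}.Finite ∧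
    {x : ℝ | 0 < x ∧ f x = 0}.ncard ≤ {x : ℝ | 0 < x ∧ deriv f x = 0}.ncard + 1 := by
  classical
  set T : Set ℝ := {x : ℝ | 0 < x ∧ deriv f x = 0} with hTdef
  set S : Set ℝ := {x : ℝ | 0 < x ∧ f x = 0} with hSdef
  have key : ∀ F : Finset ℝ, ↑F ⊆ S → F.card ≤ T.ncard + 1 := by
    intro F hFS
    rcases F.eq_empty_or_nonempty with rfl | hne
    · simp
    set M := F.max' hne with hM
    set P : ℝ → ℝ → Prop := fun x c => c ∈ T ∧ x < c ∧ ∀ y ∈ F, x < y → c < y with hP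
    have hex : ∀ x ∈ F.erase M, ∃ c, P x c := by
      intro x hx
      have hxF : x ∈ F := Finset.mem_of_mem_erase hx
      have hxM : x ≠ M := Finset.ne_of_mem_erase hx
      have hxltM : x < M := lt_of_le_of_ne (F.le_max' x hxF) hxM
      have hfilne : (F.filter (fun y => x < y)).Nonempty :=
        ⟨M, Finset.mem_filter.2 ⟨F.max'_mem hne, hxltM⟩⟩
      set nx := (F.filter (fun y => x < y)).min' hfilne with hnx
      have hnxmem := (F.filter (fun y => x < y)).min'_mem hfilne
      rw [Finset.mem_filter] at hnxmem
      have hxnx : x < nx := hnxmem.2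
      have hfx : f x = 0 := (hFS hxF).2
      have hfnx : f nx = 0 := (hFS hnxmem.1).2
      obtain ⟨c, hc, hc0⟩ := exists_deriv_eq_zero hxnx
        (hf.continuous.continuousOn) (hfx.trans hfnx.symm)
      refine ⟨c, ⟨lt_trans (hFS hxF).1 hc.1, hc0⟩, hc.1, ?_⟩
      intro y hyF hxy
      have : nx ≤ y := Finset.min'_le _ y (Finset.mem_filter.2 ⟨hyF, hxy⟩)
      exact lt_of_lt_of_le hc.2 this
    set φ : ℝ → ℝ := fun x => if h : ∃ c, P x c then h.choose else 0 with hφ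
    have hφP : ∀ x ∈ F.erase M, P x (φ x) := by
      intro x hx
      have h := hex x hx
      simp only [hφ, dif_pos h]
      exact h.choose_spec
    have hinj : Set.InjOn φ (F.erase M) := by
      intro x hx y hy hxy
      by_contra hne'
      rcases lt_or_gt_of_ne hne' with h | h
      · have h1 := (hφP x hx).2.2 y (Finset.mem_of_mem_erase hy) h
        have h2 := (hφP y hy).2.1
        rw [hxy] at h1; exact absurd (h2.trans h1) (lt_irrefl _)
      · have h1 := (hφP y hy).2.2 x (Finset.mem_of_mem_erase hx) h
        have h2 := (hφP x hx).2.1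
        rw [← hxy] at h1; exact absurd (h2.trans h1) (lt_irrefl _)
    have hmaps : ∀ x ∈ F.erase M, φ x ∈ hT.toFinset := by
      intro x hx
      simpa using (hφP x hx).1
    have hcard : (F.erase M).card ≤ hT.toFinset.card :=
      Finset.card_le_card_of_injOn φ hmaps hinj
    have hTn : T.ncard = hT.toFinset.card := Set.ncard_eq_toFinset_card T hT
    have h2 : F.card ≤ (F.erase M).card + 1 := by
      have := Finset.card_erase_add_one (show M ∈ F from F.max'_mem hne)
      omega
    calc F.card ≤ (F.erase M).card + 1 := h2
      _ ≤ hT.toFinset.card + 1 := by omega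
      _ = T.ncard + 1 := by rw [hTn]
  -- S is finite
  have hSfin : S.Finite := by
    by_contra hinf
    obtain ⟨t, hts, htfin, htcard⟩ := (show S.Infinite from hinf).exists_subset_ncard_eq (T.ncard + 2)
    have := key htfin.toFinset (by simpa using hts)
    rw [← Set.ncard_eq_toFinset_card t htfin] at this
    omega
  refine ⟨hSfin, ?_⟩
  have := key hSfin.toFinset (by simp)
  rwa [← Set.ncard_eq_toFinset_card S hSfin] at this

lemma upper_bound : ∀ (n : ℕ), 1 ≤ n → ∀ (t : ℕ → ℕ), (∀ i j, i < j → j < n → t i < t j) →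
    ∀ (a : ℕ → ℝ), (∀ j < n, a j ≠ 0) →
    {x : ℝ | 0 < x ∧ ∑ j ∈ Finset.range n, a j * x ^ t j = 0}.Finite ∧
    {x : ℝ | 0 < x ∧ ∑ j ∈ Finset.range n, a j * x ^ t j = 0}.ncard ≤ n - 1 := by
  intro n
  induction n with
  | zero => omega
  | succ n IH =>
    intro _ t ht a ha
    rcases Nat.eq_zero_or_pos n with rfl | hn
    · have hempty : {x : ℝ | 0 < x ∧ ∑ j ∈ Finset.range 1, a j * x ^ t j = 0} = ∅ := by
        ext x
        simp only [Finset.sum_range_one, mem_setOf_eq, mem_empty_iff_false, iff_false, not_and]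
        intro hx h0
        exact (mul_ne_zero (ha 0 one_pos) (pow_ne_zero _ (ne_of_gt hx))) h0
      rw [hempty]
      simp
    · set g : ℝ → ℝ := fun x => ∑ j ∈ Finset.range (n+1), a j * x ^ (t j - t 0) with hg
      have ht0 : ∀ j < n + 1, t 0 ≤ t j := by
        intro j hj
        rcases Nat.eq_zero_or_pos j with rfl | hj0
        · exact le_refl _
        · exact le_of_lt (ht 0 j hj0 hj)
      have hSeq : {x : ℝ | 0 < x ∧ ∑ j ∈ Finset.range (n+1), a j * x ^ t j = 0}
          = {x : ℝ | 0 < x ∧ g x = 0} := by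
        ext x
        simp only [mem_setOf_eq, and_congr_right_iff]
        intro hx
        have hfac : ∑ j ∈ Finset.range (n+1), a j * x ^ t j = x ^ t 0 * g x := by
          rw [hg, Finset.mul_sum]
          refine Finset.sum_congr rfl ?_
          intro j hj
          rw [Finset.mem_range] at hj
          rw [← mul_assoc, mul_comm (x ^ t 0) (a j), mul_assoc, ← pow_add]
          congr 2
          have := ht0 j hj
          omega
        rw [hfac, mul_eq_zero]
        have : x ^ t 0 ≠ 0 := pow_ne_zero _ (ne_of_gt hx)
        tauto
      have hgdiff : Differentiable ℝ g := by
        apply Differentiable.fun_sum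
        intro j _
        exact (differentiable_pow _).const_mul _
      set b : ℕ → ℝ := fun j => a (j+1) * ((t (j+1) - t 0 : ℕ) : ℝ) with hb
      set u : ℕ → ℕ := fun j => t (j+1) - t 0 - 1 with hu
      have hderiv : ∀ x : ℝ, deriv g x = ∑ j ∈ Finset.range n, b j * x ^ u j := by
        intro x
        rw [hg]
        rw [deriv_fun_sum (fun j _ => ((differentiable_pow _).const_mul _).differentiableAt)]
        have hterm : ∀ j, deriv (fun x : ℝ => a j * x ^ (t j - t 0)) x
            = a j * ((t j - t 0 : ℕ) * x ^ (t j - t 0 - 1)) := by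
          intro j
          rw [deriv_const_mul _ (differentiableAt_pow _), deriv_pow_field]
        simp only [hterm]
        rw [Finset.sum_range_succ']
        simp only [Nat.sub_self, Nat.cast_zero, zero_mul, mul_zero, add_zero]
        refine Finset.sum_congr rfl ?_
        intro j _
        rw [hb, hu]
        ring
      have hbne : ∀ j < n, b j ≠ 0 := by
        intro j hj
        apply mul_ne_zero (ha (j+1) (by omega))
        have : t 0 < t (j+1) := ht 0 (j+1) (by omega) (by omega)
        simp only [ne_eq, Nat.cast_eq_zero]
        omega
      have humono : ∀ i j, i < j → j < n → u i < u j := by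
        intro i j hij hjn
        have h1 : t 0 < t (i+1) := ht 0 (i+1) (by omega) (by omega)
        have h2 : t (i+1) < t (j+1) := ht (i+1) (j+1) (by omega) (by omega)
        simp only [hu]
        omega
      obtain ⟨hTfin, hTcard⟩ := IH hn u humono b hbne
      have hTeq : {x : ℝ | 0 < x ∧ deriv g x = 0}
          = {x : ℝ | 0 < x ∧ ∑ j ∈ Finset.range n, b j * x ^ u j = 0} := by
        ext x; rw [mem_setOf_eq, mem_setOf_eq, hderiv]
      obtain ⟨hSfin, hScard⟩ := rolle_count g hgdiff (by rw [hTeq]; exact hTfin)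
      rw [hTeq] at hScard
      rw [hSeq]
      exact ⟨hSfin, by omega⟩

lemma alt_exists : ∀ (n : ℕ), 1 ≤ n → ∀ (t : ℕ → ℕ), (∀ i j, i < j → j < n → t i < t j) →
    ∃ (a : ℕ → ℝ) (y : ℕ → ℝ), (∀ j < n, a j ≠ 0) ∧ (∀ i < n, 0 < y i) ∧
      (∀ i j, i < j → j < n → y i < y j) ∧
      (∀ i < n, 0 < (-1:ℝ)^i * ∑ j ∈ Finset.range n, a j * y i ^ t j) := by
  intro n
  induction n with
  | zero => omega
  | succ n IH =>
    intro _ t ht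
    rcases Nat.eq_zero_or_pos n with rfl | hn
    · refine ⟨fun _ => 1, fun _ => 1, by simp, by simp, by omega, ?_⟩
      intro i hi
      have : i = 0 := by omega
      subst this
      simp
    · obtain ⟨b, y, hb, hy0, hymono, halt⟩ := IH hn (fun j => t (j+1))
        (fun i j hij hjn => ht (i+1) (j+1) (by omega) (by omega))
      set h : ℝ → ℝ := fun x => ∑ j ∈ Finset.range n, (-(b j)) * x ^ t (j+1) with hh
      have hhalt : ∀ i < n, 0 < (-1:ℝ)^(i+1) * h (y i) := by
        intro i hi
        have := halt i hi
        have hexp : (-1:ℝ)^(i+1) * h (y i) = (-1:ℝ)^i * ∑ j ∈ Finset.range n, b j * y i ^ t (j+1) := by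
          rw [hh]
          rw [Finset.mul_sum, Finset.mul_sum]
          refine Finset.sum_congr rfl fun j _ => ?_
          rw [pow_succ]
          ring
        rw [hexp]
        exact this
      -- choose ε small
      have hne : (Finset.range n).Nonempty := ⟨0, Finset.mem_range.2 hn⟩
      set ε : ℝ := (Finset.range n).inf' hne
          (fun i => ((-1:ℝ)^(i+1) * h (y i)) / (2 * y i ^ t 0)) with hε
      have hεpos : 0 < ε := by
        rw [hε, Finset.lt_inf'_iff]
        intro i hi
        rw [Finset.mem_range] at hi
        exact div_pos (hhalt i hi) (by have := hy0 i hi; positivity)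
      have hεsmall : ∀ i < n, ε * y i ^ t 0 < (-1:ℝ)^(i+1) * h (y i) := by
        intro i hi
        have hle : ε ≤ ((-1:ℝ)^(i+1) * h (y i)) / (2 * y i ^ t 0) :=
          Finset.inf'_le _ (Finset.mem_range.2 hi)
        have hyp : (0:ℝ) < y i ^ t 0 := pow_pos (hy0 i hi) _
        have h1 : ε * (2 * y i ^ t 0) ≤ (-1:ℝ)^(i+1) * h (y i) := by
          rwa [le_div_iff₀ (mul_pos two_pos hyp)] at hle
        have h2 := hhalt i hi
        nlinarith
      -- the key sign fact at the old points
      have hsign : ∀ i < n, 0 < (-1:ℝ)^(i+1) * (ε * y i ^ t 0 + h (y i)) := by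
        intro i hi
        have h1 := hεsmall i hi
        have hyp : (0:ℝ) < y i ^ t 0 := pow_pos (hy0 i hi) _
        rcases Nat.even_or_odd (i+1) with hpar | hpar
        · rw [hpar.neg_one_pow] at h1 ⊢
          nlinarith
        · rw [hpar.neg_one_pow] at h1 ⊢
          nlinarith
      -- find a small positive point where the new function is positive
      set φ : ℝ → ℝ := fun x => ε + ∑ j ∈ Finset.range n, (-(b j)) * x ^ (t (j+1) - t 0) with hφ
      have hφcont : ContinuousAt φ 0 := by
        apply Continuous.continuousAt
        exact continuous_const.add (continuous_finset_sum _ fun j _ =>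
          continuous_const.mul (continuous_pow _))
      have hφ0 : φ 0 = ε := by
        rw [hφ]
        simp only
        have : ∀ j ∈ Finset.range n, (-(b j)) * (0:ℝ) ^ (t (j+1) - t 0) = 0 := by
          intro j hj
          rw [Finset.mem_range] at hj
          have : t 0 < t (j+1) := ht 0 (j+1) (by omega) (by omega)
          rw [zero_pow (by omega)]
          ring
        rw [Finset.sum_congr rfl this]
        simp
      have hev : ∀ᶠ x in nhds (0:ℝ), 0 < φ x := by
        have h0 : 0 < φ 0 := by rw [hφ0]; exact hεpos
        exact hφcont.eventually (eventually_gt_nhds h0)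
      obtain ⟨δ, hδpos, hδ⟩ := Metric.eventually_nhds_iff.1 hev
      set y' : ℝ := min (δ/2) (y 0 / 2) with hy'
      have hy'pos : 0 < y' := lt_min (by linarith) (by have := hy0 0 hn; linarith)
      have hy'lt : y' < y 0 := by
        have := hy0 0 hn
        calc y' ≤ y 0 / 2 := min_le_right _ _
          _ < y 0 := by linarith
      have hy'φ : 0 < φ y' := by
        apply hδ
        rw [Real.dist_eq, sub_zero, abs_of_pos hy'pos]
        calc y' ≤ δ/2 := min_le_left _ _
          _ < δ := by linarith
      have hy'f : 0 < ε * y' ^ t 0 + h y' := by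
        have hfac : ε * y' ^ t 0 + h y' = y' ^ t 0 * φ y' := by
          rw [hφ, hh]
          simp only
          rw [mul_add, Finset.mul_sum]
          congr 1
          · ring
          · refine Finset.sum_congr rfl fun j hj => ?_
            rw [Finset.mem_range] at hj
            have hlt : t 0 < t (j+1) := ht 0 (j+1) (by omega) (by omega)
            rw [← mul_assoc, mul_comm (y' ^ t 0) (-(b j)), mul_assoc, ← pow_add]
            congr 2
            omega
        rw [hfac]
        exact mul_pos (pow_pos hy'pos _) hy'φ
      -- assemble
      refine ⟨fun j => if j = 0 then ε else -(b (j-1)), fun i => if i = 0 then y' else y (i-1),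
        ?_, ?_, ?_, ?_⟩
      · intro j hj
        by_cases hj0 : j = 0
        · simp [hj0, ne_of_gt hεpos]
        · simp only [hj0, if_false]
          have : j - 1 < n := by omega
          exact neg_ne_zero.2 (hb (j-1) this)
      · intro i hi
        by_cases hi0 : i = 0
        · simp [hi0, hy'pos]
        · simp only [hi0, if_false]
          exact hy0 (i-1) (by omega)
      · intro i j hij hjn
        have hj0 : j ≠ 0 := by omega
        by_cases hi0 : i = 0
        · simp only [hi0, if_pos rfl, hj0, if_false]
          rcases Nat.eq_zero_or_pos (j-1) with hj1 | hj1
          · rw [hj1]; exact hy'lt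
          · exact lt_trans hy'lt (hymono 0 (j-1) hj1 (by omega))
        · simp only [hi0, if_false, hj0]
          exact hymono (i-1) (j-1) (by omega) (by omega)
      · have hsum : ∀ x : ℝ, ∑ j ∈ Finset.range (n+1),
            (if j = 0 then ε else -(b (j-1))) * x ^ t j = ε * x ^ t 0 + h x := by
          intro x
          rw [Finset.sum_range_succ']
          simp only [if_pos rfl, if_true, Nat.add_sub_cancel]
          rw [hh]
          have : ∀ j ∈ Finset.range n, (if j + 1 = 0 then ε else -(b j)) * x ^ t (j+1)
              = (-(b j)) * x ^ t (j+1) := by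
            intro j _
            simp
          rw [Finset.sum_congr rfl this]
          simp only [if_true]
          ring
        intro i hi
        by_cases hi0 : i = 0
        · subst hi0
          simp only [if_pos rfl, pow_zero, one_mul]
          rw [hsum]
          exact hy'f
        · simp only [hi0, if_false]
          rw [hsum]
          have : (-1:ℝ)^i = (-1:ℝ)^((i-1)+1) := by congr 1; omega
          rw [this]
          exact hsign (i-1) (by omega)

theorem stmt8 (m : ℕ) (hm : 1 ≤ m) (s : ℕ → ℕ)
    (hs : ∀ j, j + 1 < m → s j < s (j + 1)) :
    ∃ a : ℕ → ℝ, (∀ j < m, a j ≠ 0) ∧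
      {x : ℝ | 0 < x ∧ ∑ j ∈ Finset.range m, a j * x ^ s j = 0}.Finite ∧
      {x : ℝ | 0 < x ∧ ∑ j ∈ Finset.range m, a j * x ^ s j = 0}.ncard = m - 1 := by
  classical
  have hmono : ∀ i j, i < j → j < m → s i < s j := by
    intro i j hij hjm
    induction j with
    | zero => omega
    | succ k IHk =>
      rcases Nat.lt_or_ge i k with h | h
      · exact lt_trans (IHk h (by omega)) (hs k hjm)
      · have : i = k := by omega
        subst this
        exact hs i hjm
  obtain ⟨a, y, ha, hy0, hymono, halt⟩ := alt_exists m hm s hmono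
  obtain ⟨hSfin, hSle⟩ := upper_bound m hm s hmono a ha
  set f : ℝ → ℝ := fun x => ∑ j ∈ Finset.range m, a j * x ^ s j with hf
  set S : Set ℝ := {x : ℝ | 0 < x ∧ f x = 0} with hS
  have hfcont : Continuous f :=
    continuous_finset_sum _ fun j _ => continuous_const.mul (continuous_pow _)
  have hroot : ∀ i : ℕ, ∃ r : ℝ, i + 1 < m → (y i < r ∧ r < y (i+1) ∧ f r = 0) := by
    intro i
    by_cases hi : i + 1 < m
    · have h1 := halt i (by omega)
      have h2 := halt (i+1) hi
      have hyy : y i < y (i+1) := hymono i (i+1) (by omega) hi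
      have hprod : f (y i) * f (y (i+1)) < 0 := by
        have hm1 : ((-1:ℝ)^i * f (y i)) * ((-1:ℝ)^(i+1) * f (y (i+1)))
            = -(f (y i) * f (y (i+1))) := by
          have hpow : (-1:ℝ)^i * (-1:ℝ)^(i+1) = -1 := by
            rw [pow_succ]
            rw [← mul_assoc, ← pow_add, ← two_mul, pow_mul]
            simp
          calc ((-1:ℝ)^i * f (y i)) * ((-1:ℝ)^(i+1) * f (y (i+1)))
              = ((-1:ℝ)^i * (-1:ℝ)^(i+1)) * (f (y i) * f (y (i+1))) := by ring
            _ = -(f (y i) * f (y (i+1))) := by rw [hpow]; ring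
        have := mul_pos h1 h2
        rw [hm1] at this
        linarith
      rcases lt_or_gt_of_ne (fun h : f (y i) = f (y (i+1)) => by rw [h] at hprod; nlinarith) with hlt | hgt
      · have hfy1 : 0 < f (y (i+1)) := by nlinarith
        have hfy0 : f (y i) < 0 := by nlinarith
        have h0mem : (0:ℝ) ∈ Set.Ioo (f (y i)) (f (y (i+1))) := ⟨hfy0, hfy1⟩
        obtain ⟨r, hrmem, hr0⟩ := intermediate_value_Ioo (le_of_lt hyy)
          hfcont.continuousOn h0mem
        exact ⟨r, fun _ => ⟨hrmem.1, hrmem.2, hr0⟩⟩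
      · have hfy0 : 0 < f (y i) := by nlinarith
        have hfy1 : f (y (i+1)) < 0 := by nlinarith
        have h0mem : (0:ℝ) ∈ Set.Ioo (f (y (i+1))) (f (y i)) := ⟨hfy1, hfy0⟩
        obtain ⟨r, hrmem, hr0⟩ := intermediate_value_Ioo' (le_of_lt hyy)
          hfcont.continuousOn h0mem
        exact ⟨r, fun _ => ⟨hrmem.1, hrmem.2, hr0⟩⟩
    · exact ⟨1, fun h => absurd h hi⟩
  choose r hr using hroot
  have hrS : ∀ i, i + 1 < m → r i ∈ S := by
    intro i hi
    obtain ⟨h1, h2, h3⟩ := hr i hi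
    exact ⟨lt_trans (hy0 i (by omega)) h1, h3⟩
  set F : Finset ℝ := (Finset.range (m-1)).image r with hF
  have hinj : Set.InjOn r (Finset.range (m-1)) := by
    intro i hi j hj hij
    rw [Finset.coe_range, Set.mem_Iio] at hi hj
    by_contra hne
    rcases lt_or_gt_of_ne hne with h | h
    · obtain ⟨_, h2, _⟩ := hr i (by omega)
      obtain ⟨h1', _, _⟩ := hr j (by omega)
      have : y (i+1) ≤ y j := by
        rcases eq_or_lt_of_le (show i + 1 ≤ j by omega) with he | hl
        · rw [he]
        · exact le_of_lt (hymono (i+1) j hl (by omega))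
      rw [hij] at h2
      linarith
    · obtain ⟨_, h2, _⟩ := hr j (by omega)
      obtain ⟨h1', _, _⟩ := hr i (by omega)
      have : y (j+1) ≤ y i := by
        rcases eq_or_lt_of_le (show j + 1 ≤ i by omega) with he | hl
        · rw [he]
        · exact le_of_lt (hymono (j+1) i hl (by omega))
      rw [← hij] at h2
      linarith
  have hFcard : F.card = m - 1 := by
    rw [hF, Finset.card_image_of_injOn hinj, Finset.card_range]
  have hFsub : ↑F ⊆ S := by
    intro x hx
    rw [hF, Finset.coe_image, Finset.coe_range] at hx
    obtain ⟨i, hi, rfl⟩ := hx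
    rw [Set.mem_Iio] at hi
    exact hrS i (by omega)
  have hge : m - 1 ≤ S.ncard := by
    calc m - 1 = (↑F : Set ℝ).ncard := by rw [Set.ncard_coe_finset, hFcard]
      _ ≤ S.ncard := Set.ncard_le_ncard hFsub hSfin
  exact ⟨a, ha, hSfin, le_antisymm hSle hge⟩
end

section
/- Under the averaging setting with F₀ = 0, if y_j(2π, z), viewed as a function of the parameters, is a polynomial in π with rational-coefficient polynomial coefficients of degree at most j in π for every j < i, and the integrand of y_i is built from products ∏ⱼ y_j^{bⱼ} with Σ j·bⱼ = ℓ ≤ i−1, then the degree in θ of any such product is at most i−1, and consequently y_i(2π, z) is a polynomial in π of degree at most i. -/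
open Real

/-- Monomial functions `θ ↦ θ^a · sin(θ)^c · cos(θ)^d` with θ-degree `a ≤ i`. -/

def polyTrig (i : ℕ) : Set (ℝ → ℝ) :=
  {f | ∃ (a c d : ℕ), a ≤ i ∧
    f = fun θ => θ ^ a * Real.sin θ ^ c * Real.cos θ ^ d}

lemma polyTrig_mono {m n : ℕ} (h : m ≤ n) : polyTrig m ⊆ polyTrig n := by
  rintro f ⟨a, c, d, ha, rfl⟩
  exact ⟨a, c, d, ha.trans h, rfl⟩

lemma span_polyTrig_mono {m n : ℕ} (h : m ≤ n) :
    Submodule.span ℚ (polyTrig m) ≤ Submodule.span ℚ (polyTrig n) :=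
  Submodule.span_mono (polyTrig_mono h)

lemma one_mem_polyTrig (n : ℕ) : (1 : ℝ → ℝ) ∈ polyTrig n := by
  refine ⟨0, 0, 0, Nat.zero_le _, ?_⟩
  funext θ; simp

lemma span_mul {m n : ℕ} {f g : ℝ → ℝ}
    (hf : f ∈ Submodule.span ℚ (polyTrig m))
    (hg : g ∈ Submodule.span ℚ (polyTrig n)) :
    f * g ∈ Submodule.span ℚ (polyTrig (m + n)) := by
  induction hf using Submodule.span_induction with
  | mem f hf =>
    induction hg using Submodule.span_induction with
    | mem g hg =>
      obtain ⟨a1, c1, d1, ha1, rfl⟩ := hf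
      obtain ⟨a2, c2, d2, ha2, rfl⟩ := hg
      refine Submodule.subset_span ⟨a1 + a2, c1 + c2, d1 + d2, Nat.add_le_add ha1 ha2, ?_⟩
      funext θ
      simp only [Pi.mul_apply, pow_add]
      ring
    | zero => simpa using (Submodule.zero_mem _)
    | add g1 g2 hg1 hg2 ih1 ih2 =>
      rw [mul_add]
      exact Submodule.add_mem _ ih1 ih2
    | smul q g hgm ih =>
      rw [mul_smul_comm]
      exact Submodule.smul_mem _ _ ih
  | zero => simpa using (Submodule.zero_mem _)
  | add f1 f2 h1 h2 ih1 ih2 =>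
    rw [add_mul]; exact Submodule.add_mem _ ih1 ih2
  | smul q f hfm ih =>
    rw [smul_mul_assoc]; exact Submodule.smul_mem _ _ ih

lemma span_pow {m : ℕ} {f : ℝ → ℝ} (hf : f ∈ Submodule.span ℚ (polyTrig m)) (b : ℕ) :
    f ^ b ∈ Submodule.span ℚ (polyTrig (m * b)) := by
  induction b with
  | zero => simpa using Submodule.subset_span (one_mem_polyTrig 0)
  | succ b ih =>
    have := span_mul ih hf
    rw [← pow_succ] at this
    simpa [Nat.mul_succ] using this

lemma span_prod (y : ℕ → ℝ → ℝ) (b : ℕ → ℕ) (s : Finset ℕ)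
    (hy : ∀ j ∈ s, y j ∈ Submodule.span ℚ (polyTrig j)) :
    (∏ j ∈ s, (y j) ^ (b j)) ∈ Submodule.span ℚ (polyTrig (∑ j ∈ s, j * b j)) := by
  induction s using Finset.cons_induction with
  | empty => simpa using Submodule.subset_span (one_mem_polyTrig 0)
  | cons j s hj ih =>
    rw [Finset.prod_cons, Finset.sum_cons]
    exact span_mul (span_pow (hy j (Finset.mem_cons_self j s)) (b j))
      (ih fun k hk => hy k (Finset.mem_cons_of_mem hk))

/-- Monomials `θ^a * cos(kθ)` and `θ^a * sin(kθ)` with `a ≤ i`, `k : ℤ`. -/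
def trigMon (i : ℕ) : Set (ℝ → ℝ) :=
  {f | ∃ (a : ℕ) (k : ℤ), a ≤ i ∧
    (f = (fun θ => θ ^ a * Real.cos (k * θ)) ∨ f = (fun θ => θ ^ a * Real.sin (k * θ)))}

lemma trigMon_mul_sin {i : ℕ} {h : ℝ → ℝ} (hh : h ∈ Submodule.span ℚ (trigMon i)) :
    (fun θ => h θ * Real.sin θ) ∈ Submodule.span ℚ (trigMon i) := by
  induction hh using Submodule.span_induction with
  | mem f hf =>
    obtain ⟨a, k, ha, hf | hf⟩ := hf <;> subst hf
    · -- θ^a cos(kθ) sinθ = 1/2 θ^a sin((k+1)θ) - 1/2 θ^a sin((k-1)θ)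
      have : (fun θ => (θ ^ a * Real.cos (k * θ)) * Real.sin θ)
          = (1/2 : ℚ) • (fun θ => θ ^ a * Real.sin (((k+1 : ℤ) : ℝ) * θ))
            - (1/2 : ℚ) • (fun θ => θ ^ a * Real.sin (((k-1 : ℤ) : ℝ) * θ)) := by
        funext θ
        simp only [Pi.sub_apply, Pi.smul_apply, Rat.smul_def]
        push_cast
        rw [add_mul, sub_mul, one_mul, Real.sin_add, Real.sin_sub]
        ring
      rw [this]
      exact Submodule.sub_mem _
        (Submodule.smul_mem _ _ (Submodule.subset_span ⟨a, k+1, ha, Or.inr rfl⟩))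
        (Submodule.smul_mem _ _ (Submodule.subset_span ⟨a, k-1, ha, Or.inr rfl⟩))
    · -- θ^a sin(kθ) sinθ = 1/2 θ^a cos((k-1)θ) - 1/2 θ^a cos((k+1)θ)
      have : (fun θ => (θ ^ a * Real.sin (k * θ)) * Real.sin θ)
          = (1/2 : ℚ) • (fun θ => θ ^ a * Real.cos (((k-1 : ℤ) : ℝ) * θ))
            - (1/2 : ℚ) • (fun θ => θ ^ a * Real.cos (((k+1 : ℤ) : ℝ) * θ)) := by
        funext θ
        simp only [Pi.sub_apply, Pi.smul_apply, Rat.smul_def]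
        push_cast
        rw [add_mul, sub_mul, one_mul, Real.cos_add, Real.cos_sub]
        ring
      rw [this]
      exact Submodule.sub_mem _
        (Submodule.smul_mem _ _ (Submodule.subset_span ⟨a, k-1, ha, Or.inl rfl⟩))
        (Submodule.smul_mem _ _ (Submodule.subset_span ⟨a, k+1, ha, Or.inl rfl⟩))
  | zero =>
    have : (fun θ => (0 : ℝ → ℝ) θ * Real.sin θ) = 0 := by funext θ; simp
    rw [this]; exact Submodule.zero_mem _
  | add f1 f2 h1 h2 ih1 ih2 =>
    have : (fun θ => (f1 + f2) θ * Real.sin θ)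
        = (fun θ => f1 θ * Real.sin θ) + (fun θ => f2 θ * Real.sin θ) := by
      funext θ; simp only [Pi.add_apply]; ring
    rw [this]; exact Submodule.add_mem _ ih1 ih2
  | smul q f hfm ih =>
    have : (fun θ => (q • f) θ * Real.sin θ) = q • (fun θ => f θ * Real.sin θ) := by
      funext θ; simp only [Pi.smul_apply, Rat.smul_def]; ring
    rw [this]; exact Submodule.smul_mem _ _ ih

lemma trigMon_mul_cos {i : ℕ} {h : ℝ → ℝ} (hh : h ∈ Submodule.span ℚ (trigMon i)) :
    (fun θ => h θ * Real.cos θ) ∈ Submodule.span ℚ (trigMon i) := by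
  induction hh using Submodule.span_induction with
  | mem f hf =>
    obtain ⟨a, k, ha, hf | hf⟩ := hf <;> subst hf
    · have : (fun θ => (θ ^ a * Real.cos (k * θ)) * Real.cos θ)
          = (1/2 : ℚ) • (fun θ => θ ^ a * Real.cos (((k+1 : ℤ) : ℝ) * θ))
            + (1/2 : ℚ) • (fun θ => θ ^ a * Real.cos (((k-1 : ℤ) : ℝ) * θ)) := by
        funext θ
        simp only [Pi.add_apply, Pi.smul_apply, Rat.smul_def]
        push_cast
        rw [add_mul, sub_mul, one_mul, Real.cos_add, Real.cos_sub]
        ring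
      rw [this]
      exact Submodule.add_mem _
        (Submodule.smul_mem _ _ (Submodule.subset_span ⟨a, k+1, ha, Or.inl rfl⟩))
        (Submodule.smul_mem _ _ (Submodule.subset_span ⟨a, k-1, ha, Or.inl rfl⟩))
    · have : (fun θ => (θ ^ a * Real.sin (k * θ)) * Real.cos θ)
          = (1/2 : ℚ) • (fun θ => θ ^ a * Real.sin (((k+1 : ℤ) : ℝ) * θ))
            + (1/2 : ℚ) • (fun θ => θ ^ a * Real.sin (((k-1 : ℤ) : ℝ) * θ)) := by
        funext θ
        simp only [Pi.add_apply, Pi.smul_apply, Rat.smul_def]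
        push_cast
        rw [add_mul, sub_mul, one_mul, Real.sin_add, Real.sin_sub]
        ring
      rw [this]
      exact Submodule.add_mem _
        (Submodule.smul_mem _ _ (Submodule.subset_span ⟨a, k+1, ha, Or.inr rfl⟩))
        (Submodule.smul_mem _ _ (Submodule.subset_span ⟨a, k-1, ha, Or.inr rfl⟩))
  | zero =>
    have : (fun θ => (0 : ℝ → ℝ) θ * Real.cos θ) = 0 := by funext θ; simp
    rw [this]; exact Submodule.zero_mem _
  | add f1 f2 h1 h2 ih1 ih2 =>
    have : (fun θ => (f1 + f2) θ * Real.cos θ)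
        = (fun θ => f1 θ * Real.cos θ) + (fun θ => f2 θ * Real.cos θ) := by
      funext θ; simp only [Pi.add_apply]; ring
    rw [this]; exact Submodule.add_mem _ ih1 ih2
  | smul q f hfm ih =>
    have : (fun θ => (q • f) θ * Real.cos θ) = q • (fun θ => f θ * Real.cos θ) := by
      funext θ; simp only [Pi.smul_apply, Rat.smul_def]; ring
    rw [this]; exact Submodule.smul_mem _ _ ih

lemma polyTrig_mem_span_trigMon {i : ℕ} (a c d : ℕ) (ha : a ≤ i) :
    (fun θ => θ ^ a * Real.sin θ ^ c * Real.cos θ ^ d) ∈ Submodule.span ℚ (trigMon i) := by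
  induction d with
  | zero =>
    induction c with
    | zero =>
      have : (fun θ : ℝ => θ ^ a * Real.sin θ ^ 0 * Real.cos θ ^ 0)
          = (fun θ => θ ^ a * Real.cos ((0 : ℤ) * θ)) := by
        funext θ; simp
      rw [this]
      exact Submodule.subset_span ⟨a, 0, ha, Or.inl rfl⟩
    | succ c ih =>
      have : (fun θ : ℝ => θ ^ a * Real.sin θ ^ (c+1) * Real.cos θ ^ 0)
          = (fun θ => (θ ^ a * Real.sin θ ^ c * Real.cos θ ^ 0) * Real.sin θ) := by
        funext θ; ring
      rw [this]
      exact trigMon_mul_sin ih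
  | succ d ih =>
    have : (fun θ : ℝ => θ ^ a * Real.sin θ ^ c * Real.cos θ ^ (d+1))
        = (fun θ => (θ ^ a * Real.sin θ ^ c * Real.cos θ ^ d) * Real.cos θ) := by
      funext θ; ring
    rw [this]
    exact trigMon_mul_cos ih

def Mset (n : ℕ) (x : ℝ) : Prop :=
  ∃ p : Polynomial ℚ, p.natDegree ≤ n ∧ x = Polynomial.aeval π p

lemma Mset.zero (n : ℕ) : Mset n 0 := ⟨0, by simp, by simp⟩

lemma Mset.add {n : ℕ} {x y : ℝ} (hx : Mset n x) (hy : Mset n y) : Mset n (x + y) := by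
  obtain ⟨p, hp, rfl⟩ := hx
  obtain ⟨q, hq, rfl⟩ := hy
  exact ⟨p + q, (Polynomial.natDegree_add_le p q).trans (max_le hp hq), by simp⟩

lemma Mset.ratmul {n : ℕ} {x : ℝ} (q : ℚ) (hx : Mset n x) : Mset n ((q : ℝ) * x) := by
  obtain ⟨p, hp, rfl⟩ := hx
  refine ⟨Polynomial.C q * p, (Polynomial.natDegree_mul_le).trans ?_, by simp⟩
  simpa using hp

lemma Mset.mono {m n : ℕ} (h : m ≤ n) {x : ℝ} (hx : Mset m x) : Mset n x := by
  obtain ⟨p, hp, rfl⟩ := hx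
  exact ⟨p, hp.trans h, rfl⟩

lemma Mset.pi_pow {m n : ℕ} (h : m ≤ n) (q : ℚ) : Mset n ((q : ℝ) * π ^ m) := by
  refine ⟨Polynomial.C q * Polynomial.X ^ m, Polynomial.natDegree_mul_le.trans ?_, by simp⟩
  simpa using h

lemma hasDerivAt_sin_int (k : ℤ) (x : ℝ) :
    HasDerivAt (fun θ : ℝ => Real.sin (k * θ)) (Real.cos (k * x) * k) x := by
  simpa [Function.comp_def] using (Real.hasDerivAt_sin ((k : ℝ) * x)).comp x ((hasDerivAt_id x).const_mul (k : ℝ))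

lemma hasDerivAt_cos_int (k : ℤ) (x : ℝ) :
    HasDerivAt (fun θ : ℝ => Real.cos (k * θ)) (-Real.sin (k * x) * k) x := by
  simpa [Function.comp_def] using (Real.hasDerivAt_cos ((k : ℝ) * x)).comp x ((hasDerivAt_id x).const_mul (k : ℝ))

lemma sin_int_two_pi (k : ℤ) : Real.sin ((k : ℝ) * (2 * π)) = 0 := by
  have : (k : ℝ) * (2 * π) = ((2 * k : ℤ) : ℝ) * π := by push_cast; ring
  rw [this, Real.sin_int_mul_pi]

lemma cos_int_two_pi (k : ℤ) : Real.cos ((k : ℝ) * (2 * π)) = 1 :=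
  Real.cos_int_mul_two_pi k

lemma int_cos_eq (a : ℕ) (k : ℤ) (hk : k ≠ 0) :
    ∫ θ in (0:ℝ)..(2*π), θ ^ a * Real.cos (k * θ)
      = -((a : ℝ) / k) * ∫ θ in (0:ℝ)..(2*π), θ ^ (a - 1) * Real.sin (k * θ) := by
  have hk' : (k : ℝ) ≠ 0 := Int.cast_ne_zero.mpr hk
  have hu : ∀ x ∈ Set.uIcc (0:ℝ) (2*π), HasDerivAt (fun θ : ℝ => θ ^ a)
      ((a : ℝ) * x ^ (a - 1)) x := fun x _ => hasDerivAt_pow a x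
  have hv : ∀ x ∈ Set.uIcc (0:ℝ) (2*π), HasDerivAt (fun θ : ℝ => Real.sin (k * θ) / k)
      (Real.cos (k * x)) x := by
    intro x _
    have := (hasDerivAt_sin_int k x).div_const (k : ℝ)
    simpa [mul_div_assoc, div_self hk'] using this
  have hu' : IntervalIntegrable (fun x : ℝ => (a : ℝ) * x ^ (a - 1))
      MeasureTheory.volume 0 (2*π) := (by continuity : Continuous _).intervalIntegrable _ _
  have hv' : IntervalIntegrable (fun x : ℝ => Real.cos (k * x))
      MeasureTheory.volume 0 (2*π) := (by continuity : Continuous _).intervalIntegrable _ _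
  have H := intervalIntegral.integral_mul_deriv_eq_deriv_mul hu hv hu' hv'
  rw [H]
  rw [show ((0:ℝ) ^ a * (Real.sin ((k:ℝ) * 0) / k)) = 0 by simp]
  rw [show ((2*π) ^ a * (Real.sin ((k:ℝ) * (2*π)) / k)) = 0 by rw [sin_int_two_pi]; simp]
  have : (fun x : ℝ => (a : ℝ) * x ^ (a - 1) * (Real.sin (k * x) / k))
      = fun x : ℝ => ((a : ℝ) / k) * (x ^ (a - 1) * Real.sin (k * x)) := by
    funext x; ring
  rw [this, intervalIntegral.integral_const_mul]
  ring

lemma int_sin_eq (a : ℕ) (k : ℤ) (hk : k ≠ 0) :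
    ∫ θ in (0:ℝ)..(2*π), θ ^ a * Real.sin (k * θ)
      = -((2*π) ^ a / k) + (0:ℝ) ^ a / k
        + ((a : ℝ) / k) * ∫ θ in (0:ℝ)..(2*π), θ ^ (a - 1) * Real.cos (k * θ) := by
  have hk' : (k : ℝ) ≠ 0 := Int.cast_ne_zero.mpr hk
  have hu : ∀ x ∈ Set.uIcc (0:ℝ) (2*π), HasDerivAt (fun θ : ℝ => θ ^ a)
      ((a : ℝ) * x ^ (a - 1)) x := fun x _ => hasDerivAt_pow a x
  have hv : ∀ x ∈ Set.uIcc (0:ℝ) (2*π), HasDerivAt (fun θ : ℝ => -(Real.cos (k * θ) / k))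
      (Real.sin (k * x)) x := by
    intro x _
    have := ((hasDerivAt_cos_int k x).div_const (k : ℝ)).neg
    simpa [Pi.neg_def, neg_div, neg_neg, mul_div_assoc, div_self hk'] using this
  have hu' : IntervalIntegrable (fun x : ℝ => (a : ℝ) * x ^ (a - 1))
      MeasureTheory.volume 0 (2*π) := (by continuity : Continuous _).intervalIntegrable _ _
  have hv' : IntervalIntegrable (fun x : ℝ => Real.sin (k * x))
      MeasureTheory.volume 0 (2*π) := (by continuity : Continuous _).intervalIntegrable _ _
  have H := intervalIntegral.integral_mul_deriv_eq_deriv_mul hu hv hu' hv'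
  rw [H]
  rw [show ((2*π) ^ a * -(Real.cos ((k:ℝ) * (2*π)) / k)) = -((2*π) ^ a / k) by
    rw [cos_int_two_pi]; ring]
  rw [show ((0:ℝ) ^ a * -(Real.cos ((k:ℝ) * 0) / k)) = -((0:ℝ) ^ a / k) by
    rw [mul_zero, Real.cos_zero]; ring]
  have : (fun x : ℝ => (a : ℝ) * x ^ (a - 1) * -(Real.cos (k * x) / k))
      = fun x : ℝ => -(((a : ℝ) / k) * (x ^ (a - 1) * Real.cos (k * x))) := by
    funext x; ring
  rw [this, intervalIntegral.integral_neg, intervalIntegral.integral_const_mul]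
  ring

lemma integral_trig (a : ℕ) (k : ℤ) (hk : k ≠ 0) :
    Mset a (∫ θ in (0:ℝ)..(2*π), θ ^ a * Real.cos (k * θ))
      ∧ Mset a (∫ θ in (0:ℝ)..(2*π), θ ^ a * Real.sin (k * θ)) := by
  induction a with
  | zero =>
    constructor
    · rw [int_cos_eq 0 k hk]
      simpa using Mset.zero 0
    · rw [int_sin_eq 0 k hk]
      simpa using Mset.zero 0
  | succ a ih =>
    have hk' : (k : ℝ) ≠ 0 := Int.cast_ne_zero.mpr hk
    constructor
    · rw [int_cos_eq (a+1) k hk]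
      have h1 : -(((a+1 : ℕ) : ℝ) / k) = ((-((a+1 : ℚ)) / (k : ℚ) : ℚ) : ℝ) := by
        push_cast; ring
      rw [show (a + 1 - 1) = a from rfl, h1]
      exact (Mset.ratmul _ ih.2).mono (Nat.le_succ a)
    · rw [int_sin_eq (a+1) k hk]
      rw [show (a + 1 - 1) = a from rfl]
      have h0 : ((0:ℝ) ^ (a+1) / k) = 0 := by simp
      have h2 : -((2*π) ^ (a+1) / k) = ((-(2^(a+1) : ℚ) / (k:ℚ) : ℚ) : ℝ) * π ^ (a+1) := by
        push_cast; rw [mul_pow]; ring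
      rw [h0, h2]
      refine (Mset.pi_pow le_rfl _).add ?_ |>.add ?_ |>.mono ?_
      · exact Mset.zero _
      · have h1 : (((a+1 : ℕ) : ℝ) / k) = (((a+1 : ℚ) / (k : ℚ) : ℚ) : ℝ) := by
          push_cast; ring
        rw [h1]
        exact (Mset.ratmul _ ih.1).mono (Nat.le_succ a)
      · exact le_rfl

lemma span_trigMon_integral {m : ℕ} {f : ℝ → ℝ}
    (hf : f ∈ Submodule.span ℚ (trigMon m)) :
    IntervalIntegrable f MeasureTheory.volume 0 (2*π) ∧
      Mset (m+1) (∫ θ in (0:ℝ)..(2*π), f θ) := by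
  induction hf using Submodule.span_induction with
  | mem f hf =>
    obtain ⟨a, k, ha, hf | hf⟩ := hf <;> subst hf
    · constructor
      · exact (by continuity :
          Continuous fun θ : ℝ => θ ^ a * Real.cos (k * θ)).intervalIntegrable _ _
      · show Mset (m+1) (∫ θ in (0:ℝ)..(2*π), θ ^ a * Real.cos (k * θ))
        by_cases hk : k = 0
        · subst hk
          have heq : (∫ θ in (0:ℝ)..(2*π), θ ^ a * Real.cos ((0:ℤ) * θ))
              = ∫ θ in (0:ℝ)..(2*π), θ ^ a := by
            congr 1
            funext θ
            simp
          rw [heq, integral_pow]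
          have h2 : ((2*π) ^ (a+1) - (0:ℝ) ^ (a+1)) / ((a : ℝ) + 1)
              = (((2^(a+1) / (a+1) : ℚ)) : ℝ) * π ^ (a+1) := by
            have hne : ((a : ℝ) + 1) ≠ 0 := by positivity
            push_cast
            rw [zero_pow (Nat.succ_ne_zero a), mul_pow]
            field_simp
            ring
          rw [h2]
          exact Mset.pi_pow (by omega) _
        · exact ((integral_trig a k hk).1).mono (by omega)
    · constructor
      · exact (by continuity :
          Continuous fun θ : ℝ => θ ^ a * Real.sin (k * θ)).intervalIntegrable _ _
      · show Mset (m+1) (∫ θ in (0:ℝ)..(2*π), θ ^ a * Real.sin (k * θ))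
        by_cases hk : k = 0
        · subst hk
          have heq : (∫ θ in (0:ℝ)..(2*π), θ ^ a * Real.sin ((0:ℤ) * θ))
              = ∫ θ in (0:ℝ)..(2*π), (0:ℝ) := by
            congr 1
            funext θ
            simp
          rw [heq]
          simpa using Mset.zero (m+1)
        · exact ((integral_trig a k hk).2).mono (by omega)
  | zero =>
    constructor
    · exact intervalIntegrable_const
    · simpa using Mset.zero (m+1)
  | add f1 f2 h1 h2 ih1 ih2 =>
    constructor
    · exact ih1.1.add ih2.1
    · have heq : (∫ θ in (0:ℝ)..(2*π), (f1 + f2) θ)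
          = (∫ θ in (0:ℝ)..(2*π), f1 θ) + ∫ θ in (0:ℝ)..(2*π), f2 θ := by
        simp only [Pi.add_apply]
        exact intervalIntegral.integral_add ih1.1 ih2.1
      rw [heq]
      exact ih1.2.add ih2.2
  | smul q f hfm ih =>
    have hqf : q • f = fun θ => (q : ℝ) * f θ := by
      funext θ
      simp [Rat.smul_def]
    constructor
    · rw [hqf]
      exact ih.1.const_mul _
    · have heq : (∫ θ in (0:ℝ)..(2*π), (q • f) θ)
          = (q : ℝ) * ∫ θ in (0:ℝ)..(2*π), f θ := by
        rw [hqf, intervalIntegral.integral_const_mul]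
      rw [heq]
      exact Mset.ratmul q ih.2

theorem stmt18 (i : ℕ) (hi : 1 ≤ i)
    (y : ℕ → ℝ → ℝ)
    (hy : ∀ j, 1 ≤ j → j ≤ i - 1 → y j ∈ Submodule.span ℚ (polyTrig j))
    (g : ℝ → ℝ) (hg : g ∈ Submodule.span ℚ (polyTrig (i - 1)))
    (yi : ℝ → ℝ) (hyi : ∀ θ, yi θ = ∫ s in (0:ℝ)..θ, g s) :
    (∀ ℓ, 1 ≤ ℓ → ℓ ≤ i - 1 → ∀ b : ℕ → ℕ,
      (∑ j ∈ Finset.Icc 1 ℓ, j * b j = ℓ) →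
      (fun θ => ∏ j ∈ Finset.Icc 1 ℓ, y j θ ^ b j)
        ∈ Submodule.span ℚ (polyTrig (i - 1))) ∧
    ∃ p : Polynomial ℚ, p.natDegree ≤ i ∧ yi (2 * π) = Polynomial.aeval π p := by
  constructor
  · intro ℓ h1 h2 b hb
    have hfun : (fun θ => ∏ j ∈ Finset.Icc 1 ℓ, y j θ ^ b j)
        = ∏ j ∈ Finset.Icc 1 ℓ, (y j) ^ (b j) := by
      funext θ
      simp [Finset.prod_apply]
    rw [hfun]
    have hmem := span_prod y b (Finset.Icc 1 ℓ) (fun j hj => by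
      obtain ⟨hj1, hj2⟩ := Finset.mem_Icc.mp hj
      exact hy j hj1 (hj2.trans h2))
    rw [hb] at hmem
    exact span_polyTrig_mono h2 hmem
  · have hsub : Submodule.span ℚ (polyTrig (i-1)) ≤ Submodule.span ℚ (trigMon (i-1)) := by
      rw [Submodule.span_le]
      rintro f ⟨a, c, d, ha, rfl⟩
      exact polyTrig_mem_span_trigMon a c d ha
    have hI := (span_trigMon_integral (hsub hg)).2
    rw [show i - 1 + 1 = i from by omega] at hI
    obtain ⟨p, hp, hval⟩ := hI
    exact ⟨p, hp, by rw [hyi (2*π)]; exact hval⟩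
end
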